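/- arXiv:2110.13406 — 2 statements merged into one kernel-verified Lean document; each statement's English description precedes it below -/
import Mathlib

section
/- Let $\mathcal{F}_n$ be a sequence of $\sigma$-algebras and $A_n \ge 0$ a sequence of nonnegative random variables. If the conditional expectations $\mathbb{E}[A_n \mid \mathcal{F}_n]$ converge to $0$ in probability, then $A_n$ converges to $0$ in probability. -/
open MeasureTheory ProbabilityTheory Filter

/-- If nonnegative random variables `A n` have conditional expectations
`E[A n | 𝓕 n]` (with respect to a sequence of sub-σ-algebras `𝓕 n`) converging to `0`
in probability, then `A n → 0` in probability. -/
theorem conditional_to_unconditional_convergence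
    {Ω : Type*} {mΩ : MeasurableSpace Ω} {μ : Measure Ω} [IsProbabilityMeasure μ]
    (𝓕 : ℕ → MeasurableSpace Ω) (h𝓕 : ∀ n, 𝓕 n ≤ mΩ)
    (A : ℕ → Ω → ℝ)
    (hA_int : ∀ n, Integrable (A n) μ)
    (hA_nonneg : ∀ n ω, 0 ≤ A n ω)
    (hconv : TendstoInMeasure μ (fun n => μ[A n | 𝓕 n]) atTop (fun _ => (0 : ℝ))) :
    TendstoInMeasure μ A atTop (fun _ => (0 : ℝ)) := by
  rw [tendstoInMeasure_iff_dist] at hconv ⊢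
  intro ε hε
  rw [ENNReal.tendsto_nhds_zero]
  intro η hη
  -- choose a small positive real r with ofReal r ≤ η / 2
  set c : ENNReal := min (η / 2) 1 with hc
  have hc_pos : 0 < c := lt_min (ENNReal.half_pos hη.ne') one_pos
  have hc_ne_top : c ≠ ⊤ := ne_top_of_le_ne_top ENNReal.one_ne_top (min_le_right _ _)
  set r : ℝ := c.toReal with hr
  have hr_pos : 0 < r := ENNReal.toReal_pos hc_pos.ne' hc_ne_top
  have hofr : ENNReal.ofReal r = c := ENNReal.ofReal_toReal hc_ne_top
  set δ : ℝ := ε * r with hδ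
  have hδ_pos : 0 < δ := mul_pos hε hr_pos
  -- eventually the bad set for the conditional expectation is small
  have h1 := (ENNReal.tendsto_nhds_zero.1 (hconv δ hδ_pos)) (η / 2) (ENNReal.half_pos hη.ne')
  filter_upwards [h1] with n hn
  haveI : SigmaFinite (μ.trim (h𝓕 n)) := by infer_instance
  set G : Set Ω := {ω | (μ[A n | 𝓕 n]) ω ≤ δ} with hG
  have hG_meas' : MeasurableSet[𝓕 n] G :=
    (stronglyMeasurable_condExp (f := A n) (m := 𝓕 n)).measurable measurableSet_Iic
  have hG_meas : MeasurableSet G := h𝓕 n _ hG_meas'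
  -- bound on the first piece via Markov on μ.restrict G
  have hmarkov : ε * ((μ.restrict G) {x | ε ≤ A n x}).toReal ≤ ∫ x in G, A n x ∂μ :=
    mul_meas_ge_le_integral_of_nonneg
      (Filter.Eventually.of_forall fun x => hA_nonneg n x)
      ((hA_int n).restrict) ε
  have hint_eq : ∫ x in G, A n x ∂μ = ∫ x in G, (μ[A n | 𝓕 n]) x ∂μ :=
    (setIntegral_condExp (h𝓕 n) (hA_int n) hG_meas').symm
  have hint_le : ∫ x in G, (μ[A n | 𝓕 n]) x ∂μ ≤ δ := by
    calc ∫ x in G, (μ[A n | 𝓕 n]) x ∂μ ≤ ∫ _ in G, δ ∂μ := by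
          refine setIntegral_mono_on integrable_condExp.restrict
            (integrable_const δ) hG_meas fun x hx => hx
      _ = δ * (μ G).toReal := by simp [mul_comm, Measure.real]
      _ ≤ δ * 1 := by
          refine mul_le_mul_of_nonneg_left ?_ hδ_pos.le
          exact ENNReal.toReal_le_of_le_ofReal one_pos.le (by simp [prob_le_one])
      _ = δ := mul_one δ
  have hfirst : μ ({x | ε ≤ A n x} ∩ G) ≤ η / 2 := by
    have hfin : μ ({x | ε ≤ A n x} ∩ G) ≠ ⊤ := measure_ne_top μ _
    have h2 : (μ ({x | ε ≤ A n x} ∩ G)).toReal ≤ r := by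
      have := hmarkov.trans (hint_eq ▸ hint_le)
      rw [Measure.restrict_apply' hG_meas] at this
      calc (μ ({x | ε ≤ A n x} ∩ G)).toReal
          ≤ δ / ε := by rw [le_div_iff₀ hε]; linarith [this]
        _ = r := by field_simp [hδ]; exact hδ
    calc μ ({x | ε ≤ A n x} ∩ G) ≤ ENNReal.ofReal r := by
          rw [← ENNReal.ofReal_toReal hfin]
          exact ENNReal.ofReal_le_ofReal h2
      _ = c := hofr
      _ ≤ η / 2 := min_le_left _ _
  -- the complement of G is contained in the bad set for the conditional expectation
  have hGc : μ Gᶜ ≤ η / 2 := by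
    refine le_trans (measure_mono ?_) hn
    intro x hx
    simp only [hG, Set.mem_compl_iff, Set.mem_setOf_eq, not_le] at hx
    simp only [Set.mem_setOf_eq, Real.dist_eq, sub_zero]
    exact le_trans hx.le (le_abs_self _)
  -- combine
  have hsub : {x | ε ≤ dist (A n x) ((fun _ => (0:ℝ)) x)} ⊆ ({x | ε ≤ A n x} ∩ G) ∪ Gᶜ := by
    intro x hx
    simp only [Set.mem_setOf_eq, Real.dist_eq, sub_zero, abs_of_nonneg (hA_nonneg n x)] at hx
    by_cases hxG : x ∈ G
    · exact Or.inl ⟨hx, hxG⟩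
    · exact Or.inr hxG
  calc μ {x | ε ≤ dist (A n x) ((fun _ => (0:ℝ)) x)}
      ≤ μ (({x | ε ≤ A n x} ∩ G) ∪ Gᶜ) := measure_mono hsub
    _ ≤ μ ({x | ε ≤ A n x} ∩ G) + μ Gᶜ := measure_union_le _ _
    _ ≤ η / 2 + η / 2 := add_le_add hfirst hGc
    _ = η := ENNReal.add_halves η
end

section
/- Let $T$ be Bernoulli($p$), $p \in (0,1)$, independent of the square-integrable vector $(X, Y(1), Y(0))$, let $\mu_w(x) = \mathbb{E}[Y(w) \mid X = x]$, and let $\phi^* = \mu_1(X) - \mu_0(X) - \tau + \frac{T}{p}(Y - \mu_1(X)) - \frac{1-T}{1-p}(Y - \mu_0(X))$ be the efficient influence function for $\tau = \mathbb{E}[Y(1) - Y(0)]$, where $Y = TY(1) + (1-T)Y(0)$. Then $\mathrm{Var}(\phi^*) = \frac{1}{p}\mathbb{E}[\mathrm{Var}(Y(1) \mid X)] + \frac{1}{1-p}\mathbb{E}[\mathrm{Var}(Y(0) \mid X)] + \mathrm{Var}(\mu_1(X) - \mu_0(X))$. -/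
open MeasureTheory ProbabilityTheory
open scoped ENNReal

lemma my_mulL2_integrable {Ω : Type*} {mΩ : MeasurableSpace Ω} {μ : Measure Ω}
    {f g : Ω → ℝ} (hf : MemLp f 2 μ) (hg : MemLp g 2 μ) :
    Integrable (fun ω => f ω * g ω) μ := by
  have h : (1 : ℝ≥0∞) / 1 = 1 / 2 + 1 / 2 := by
    simp [one_div, ENNReal.inv_two_add_inv_two]
  have := hg.smul (r := 1) hf
  rw [memLp_one_iff_integrable] at this
  simpa [smul_eq_mul, Pi.mul_def] using this

lemma my_memℒp_two_condexp {Ω : Type*} {m mΩ : MeasurableSpace Ω} (hm : m ≤ mΩ)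
    {μ : Measure Ω} [IsProbabilityMeasure μ] {f : Ω → ℝ} (hf : MemLp f 2 μ) :
    MemLp (μ[f|m]) 2 μ := by
  have hint : Integrable f μ := hf.integrable one_le_two
  have hG : MemLp ((condExpL2 ℝ ℝ hm (hf.toLp f) : Ω →₂[μ] ℝ) : Ω → ℝ) 2 μ := Lp.memLp _
  have heq : ((condExpL2 ℝ ℝ hm (hf.toLp f) : Ω →₂[μ] ℝ) : Ω → ℝ) =ᵐ[μ] μ[f|m] := by
    refine ae_eq_condExp_of_forall_setIntegral_eq hm hint (fun s _ _ => ?_)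
      (fun s hs hμs => ?_) ?_
    · exact ((Lp.memLp _).integrable one_le_two).integrableOn
    · rw [integral_condExpL2_eq hm (hf.toLp f) hs hμs.ne]
      exact setIntegral_congr_ae (hm s hs) ((hf.coeFn_toLp).mono fun x hx _ => hx)
    · exact aestronglyMeasurable_condExpL2 hm _
  exact hG.ae_eq heq

lemma my_eif_aux {Ω : Type*} (m mT : MeasurableSpace Ω) {mΩ : MeasurableSpace Ω}
    {μ : Measure Ω} [IsProbabilityMeasure μ]
    (Y1 Y0 : Ω → ℝ) (hY1 : MemLp Y1 2 μ) (hY0 : MemLp Y0 2 μ)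
    (T : Ω → Bool) (hT : Measurable[mΩ] T)
    (p : ℝ) (hp0 : 0 < p) (hp1 : p < 1)
    (hbern : μ {ω | T ω = true} = ENNReal.ofReal p)
    (hm : m ≤ mΩ) (hmm : m ≤ mT)
    (hY1mT : Measurable[mT] Y1) (hY0mT : Measurable[mT] Y0)
    (hindep : Indep (MeasurableSpace.comap T inferInstance) mT μ) :
    variance (fun ω =>
        (μ[Y1 | m]) ω - (μ[Y0 | m]) ω
          - ((∫ ω', Y1 ω' ∂μ) - ∫ ω', Y0 ω' ∂μ)
          + ((if T ω then (1 : ℝ) else 0) / p) *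
              ((if T ω then Y1 ω else Y0 ω) - (μ[Y1 | m]) ω)
          - ((if T ω then (0 : ℝ) else 1) / (1 - p)) *
              ((if T ω then Y1 ω else Y0 ω) - (μ[Y0 | m]) ω)) μ
      = (1 / p) * (∫ ω, (Y1 ω - (μ[Y1 | m]) ω) ^ 2 ∂μ)
        + (1 / (1 - p)) * (∫ ω, (Y0 ω - (μ[Y0 | m]) ω) ^ 2 ∂μ)
        + variance (fun ω => (μ[Y1 | m]) ω - (μ[Y0 | m]) ω) μ := by
  have hp1' : (0:ℝ) < 1 - p := by linarith
  set M1 := μ[Y1 | m] with hM1def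
  set M0 := μ[Y0 | m] with hM0def
  set τ := (∫ ω', Y1 ω' ∂μ) - ∫ ω', Y0 ω' ∂μ with hτdef
  have hM1 : MemLp M1 2 μ := my_memℒp_two_condexp hm hY1
  have hM0 : MemLp M0 2 μ := my_memℒp_two_condexp hm hY0
  have hY1i : Integrable Y1 μ := hY1.integrable one_le_two
  have hY0i : Integrable Y0 μ := hY0.integrable one_le_two
  set E1 : Ω → ℝ := fun ω => Y1 ω - M1 ω with hE1def
  set E0 : Ω → ℝ := fun ω => Y0 ω - M0 ω with hE0def
  set D : Ω → ℝ := fun ω => M1 ω - M0 ω with hDdef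
  set A : Ω → ℝ := fun ω => D ω - τ with hAdef
  have hE1 : MemLp E1 2 μ := hY1.sub hM1
  have hE0 : MemLp E0 2 μ := hY0.sub hM0
  have hD : MemLp D 2 μ := hM1.sub hM0
  have hA : MemLp A 2 μ := hD.sub (memLp_const τ)
  have hE1i : Integrable E1 μ := hE1.integrable one_le_two
  have hE0i : Integrable E0 μ := hE0.integrable one_le_two
  set t : Ω → ℝ := fun ω => if T ω then 1 else 0 with htdef
  have hsetT : MeasurableSet {ω | T ω = true} := by
    exact hT (measurableSet_singleton true)
  have ht_meas : Measurable t :=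
    Measurable.ite hsetT measurable_const measurable_const
  have ht_bd : ∀ ω, ‖t ω‖ ≤ 1 := by
    intro ω; by_cases h : T ω <;> simp [htdef, h]
  have ht_bd' : ∀ ω, ‖1 - t ω‖ ≤ 1 := by
    intro ω; by_cases h : T ω <;> simp [htdef, h]
  have ht1m_meas : Measurable (fun ω => 1 - t ω) := measurable_const.sub ht_meas
  have ht_int : Integrable t μ := by
    have h := memLp_top_of_bound (μ := μ) ht_meas.aestronglyMeasurable 1 (ae_of_all μ ht_bd)
    exact h.integrable le_top
  have ht_mean : ∫ ω, t ω ∂μ = p := by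
    have : t = Set.indicator {ω | T ω = true} (fun _ => (1:ℝ)) := by
      funext ω; by_cases h : T ω <;> simp [htdef, h, Set.indicator]
    rw [this, integral_indicator_const (1:ℝ) hsetT, measureReal_def, hbern,
      ENNReal.toReal_ofReal hp0.le, smul_eq_mul, mul_one]
  -- measurability w.r.t. mT
  have hM1mT : Measurable[mT] M1 :=
    (stronglyMeasurable_condExp.measurable).mono hmm le_rfl
  have hM0mT : Measurable[mT] M0 :=
    (stronglyMeasurable_condExp.measurable).mono hmm le_rfl
  have hE1mT : Measurable[mT] E1 := hY1mT.sub hM1mT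
  have hE0mT : Measurable[mT] E0 := hY0mT.sub hM0mT
  have hAmT : Measurable[mT] A := ((hM1mT.sub hM0mT).sub measurable_const)
  -- independence: E[t g] = p E[g]
  have key : ∀ g : Ω → ℝ, Measurable[mT] g → Integrable g μ →
      ∫ ω, t ω * g ω ∂μ = p * ∫ ω, g ω ∂μ := by
    intro g hgm hgi
    have hTm : Measurable[MeasurableSpace.comap T inferInstance] T :=
      Measurable.of_comap_le le_rfl
    have htm' : Measurable[MeasurableSpace.comap T inferInstance] t :=
      Measurable.ite (by exact hTm (measurableSet_singleton true)) measurable_const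
        measurable_const
    have hIF : IndepFun t g μ := by
      rw [IndepFun_iff_Indep]
      exact indep_of_indep_of_le_right (indep_of_indep_of_le_left hindep htm'.comap_le)
        hgm.comap_le
    have := hIF.integral_mul_eq_mul_integral ht_meas.aestronglyMeasurable hgi.aestronglyMeasurable
    simpa [Pi.mul_apply, ht_mean] using this
  have key' : ∀ g : Ω → ℝ, Measurable[mT] g → Integrable g μ →
      ∫ ω, (1 - t ω) * g ω ∂μ = (1 - p) * ∫ ω, g ω ∂μ := by
    intro g hgm hgi
    have h1 : ∀ ω, (1 - t ω) * g ω = g ω - t ω * g ω := fun ω => by ring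
    simp_rw [h1]
    rw [integral_sub hgi (hgi.bdd_mul ht_meas.aestronglyMeasurable (ae_of_all _ ht_bd)),
      key g hgm hgi]
    ring
  -- orthogonality
  have hintM1 : ∫ ω, M1 ω ∂μ = ∫ ω', Y1 ω' ∂μ := integral_condExp hm
  have hintM0 : ∫ ω, M0 ω ∂μ = ∫ ω', Y0 ω' ∂μ := integral_condExp hm
  have hE1mean : ∫ ω, E1 ω ∂μ = 0 := by
    have h1 : ∫ ω, E1 ω ∂μ = (∫ ω, Y1 ω ∂μ) - ∫ ω, M1 ω ∂μ := by
      simp only [hE1def]; exact integral_sub hY1i integrable_condExp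
    rw [h1, hintM1, sub_self]
  have hE0mean : ∫ ω, E0 ω ∂μ = 0 := by
    have h1 : ∫ ω, E0 ω ∂μ = (∫ ω, Y0 ω ∂μ) - ∫ ω, M0 ω ∂μ := by
      simp only [hE0def]; exact integral_sub hY0i integrable_condExp
    rw [h1, hintM0, sub_self]
  have hcondE1 : μ[E1|m] =ᵐ[μ] 0 := by
    have h1 : μ[E1|m] =ᵐ[μ] μ[Y1|m] - μ[M1|m] := condExp_sub hY1i integrable_condExp m
    have h2 : μ[M1|m] = M1 :=
      condExp_of_stronglyMeasurable hm stronglyMeasurable_condExp integrable_condExp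
    filter_upwards [h1] with ω hω
    rw [hω, Pi.sub_apply, h2]; simp [hM1def]
  have hcondE0 : μ[E0|m] =ᵐ[μ] 0 := by
    have h1 : μ[E0|m] =ᵐ[μ] μ[Y0|m] - μ[M0|m] := condExp_sub hY0i integrable_condExp m
    have h2 : μ[M0|m] = M0 :=
      condExp_of_stronglyMeasurable hm stronglyMeasurable_condExp integrable_condExp
    filter_upwards [h1] with ω hω
    rw [hω, Pi.sub_apply, h2]; simp [hM0def]
  have hDm : StronglyMeasurable[m] D := stronglyMeasurable_condExp.sub stronglyMeasurable_condExp
  have orth : ∀ g : Ω → ℝ, MemLp g 2 μ → (μ[g|m] =ᵐ[μ] 0) →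
      ∫ ω, A ω * g ω ∂μ = 0 := by
    intro g hg hgc
    have hgi : Integrable g μ := hg.integrable one_le_two
    have hgmean : ∫ ω, g ω ∂μ = 0 := by
      rw [← integral_condExp (μ := μ) (f := g) hm, integral_congr_ae hgc]
      simp
    have hintDg : Integrable (fun ω => D ω * g ω) μ := my_mulL2_integrable hD hg
    have hDg : ∫ ω, D ω * g ω ∂μ = 0 := by
      have hpull : μ[D * g|m] =ᵐ[μ] D * μ[g|m] :=
        condExp_mul_of_stronglyMeasurable_left hDm (by exact hintDg) hgi
      have h0 : ∫ ω, D ω * g ω ∂μ = ∫ ω, (μ[D * g|m]) ω ∂μ :=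
        (integral_condExp (μ := μ) (f := D * g) hm).symm
      rw [h0, integral_congr_ae hpull]
      have hz : (D * μ[g|m] : Ω → ℝ) =ᵐ[μ] 0 := by
        filter_upwards [hgc] with ω hω
        simp [hω]
      rw [integral_congr_ae hz]
      simp
    have hexp : (fun ω => A ω * g ω) = fun ω => D ω * g ω - τ * g ω := by
      funext ω; simp only [hAdef]; ring
    rw [hexp, integral_sub hintDg (hgi.const_mul τ), hDg, integral_const_mul, hgmean]
    ring
  have hAE1 : ∫ ω, A ω * E1 ω ∂μ = 0 := orth E1 hE1 hcondE1
  have hAE0 : ∫ ω, A ω * E0 ω ∂μ = 0 := orth E0 hE0 hcondE0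
  -- the function ψ
  set ψ : Ω → ℝ := fun ω =>
    A ω + (1/p) * (t ω * E1 ω) - (1/(1-p)) * ((1 - t ω) * E0 ω) with hψdef
  have hfun : (fun ω =>
        M1 ω - M0 ω - τ
          + ((if T ω then (1 : ℝ) else 0) / p) * ((if T ω then Y1 ω else Y0 ω) - M1 ω)
          - ((if T ω then (0 : ℝ) else 1) / (1 - p)) * ((if T ω then Y1 ω else Y0 ω) - M0 ω))
      = ψ := by
    funext ω
    by_cases h : T ω = true
    · simp only [hψdef, htdef, hAdef, hDdef, hE1def, hE0def, h, if_true]; ring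
    · simp only [Bool.not_eq_true] at h
      simp only [hψdef, htdef, hAdef, hDdef, hE1def, hE0def, h, Bool.false_eq_true,
        if_false]
      ring
  -- MemLp ψ 2
  have h2 : MemLp (fun ω => t ω * E1 ω) 2 μ := by
    refine hE1.of_le (ht_meas.aestronglyMeasurable.mul hE1.aestronglyMeasurable)
      (ae_of_all _ fun ω => ?_)
    rw [norm_mul]
    calc ‖t ω‖ * ‖E1 ω‖ ≤ 1 * ‖E1 ω‖ :=
          mul_le_mul_of_nonneg_right (ht_bd ω) (norm_nonneg _)
      _ = ‖E1 ω‖ := one_mul _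
  have h3 : MemLp (fun ω => (1 - t ω) * E0 ω) 2 μ := by
    refine hE0.of_le (ht1m_meas.aestronglyMeasurable.mul hE0.aestronglyMeasurable)
      (ae_of_all _ fun ω => ?_)
    rw [norm_mul]
    calc ‖1 - t ω‖ * ‖E0 ω‖ ≤ 1 * ‖E0 ω‖ :=
          mul_le_mul_of_nonneg_right (ht_bd' ω) (norm_nonneg _)
      _ = ‖E0 ω‖ := one_mul _
  have hψ : MemLp ψ 2 μ := (hA.add (h2.const_mul _)).sub (h3.const_mul _)
  -- integrability
  have itE1 : Integrable (fun ω => t ω * E1 ω) μ :=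
    hE1i.bdd_mul ht_meas.aestronglyMeasurable (ae_of_all _ ht_bd)
  have itE0 : Integrable (fun ω => (1 - t ω) * E0 ω) μ :=
    hE0i.bdd_mul ht1m_meas.aestronglyMeasurable (ae_of_all _ ht_bd')
  have hAi : Integrable A μ := hA.integrable one_le_two
  -- means
  have hDmean : ∫ ω, D ω ∂μ = τ := by
    have h1 : ∫ ω, D ω ∂μ = (∫ ω, M1 ω ∂μ) - ∫ ω, M0 ω ∂μ := by
      simp only [hDdef]; exact integral_sub integrable_condExp integrable_condExp
    rw [h1, hintM1, hintM0]
  have hAmean : ∫ ω, A ω ∂μ = 0 := by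
    simp only [hAdef]
    rw [integral_sub (hD.integrable one_le_two) (integrable_const τ), hDmean, integral_const]
    simp
  have hψmean : ∫ ω, ψ ω ∂μ = 0 := by
    have S1 : Integrable (fun ω => A ω + (1/p) * (t ω * E1 ω)) μ :=
      hAi.add (itE1.const_mul _)
    have S2 : Integrable (fun ω => (1/(1-p)) * ((1 - t ω) * E0 ω)) μ := itE0.const_mul _
    have C1 : Integrable (fun ω => (1/p) * (t ω * E1 ω)) μ := itE1.const_mul _
    simp only [hψdef]
    rw [integral_sub S1 S2, integral_add hAi C1, integral_const_mul, integral_const_mul,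
      hAmean, key E1 hE1mT hE1i, key' E0 hE0mT hE0i, hE1mean, hE0mean]
    ring
  have hvar : variance ψ μ = ∫ ω, ψ ω ^ 2 ∂μ := by
    have h := variance_of_integral_eq_zero hψ.aestronglyMeasurable.aemeasurable hψmean
    simpa [Pi.pow_apply] using h
  -- expansion
  have hsq : (fun ω => ψ ω ^ 2) = fun ω =>
      A ω ^ 2 + (1/p^2) * (t ω * E1 ω ^ 2) + (1/(1-p)^2) * ((1 - t ω) * E0 ω ^ 2)
        + (2/p) * (t ω * (A ω * E1 ω)) - (2/(1-p)) * ((1 - t ω) * (A ω * E0 ω)) := by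
    funext ω
    by_cases h : T ω = true
    · simp only [hψdef, htdef, h, if_true]; ring
    · simp only [Bool.not_eq_true] at h
      simp only [hψdef, htdef, h, Bool.false_eq_true, if_false]
      have h1p : (1 : ℝ) - p ≠ 0 := hp1'.ne'
      field_simp
      ring
  have iA2 : Integrable (fun ω => A ω ^ 2) μ := hA.integrable_sq
  have iE12 : Integrable (fun ω => E1 ω ^ 2) μ := hE1.integrable_sq
  have iE02 : Integrable (fun ω => E0 ω ^ 2) μ := hE0.integrable_sq
  have i1 : Integrable (fun ω => t ω * E1 ω ^ 2) μ :=
    iE12.bdd_mul ht_meas.aestronglyMeasurable (ae_of_all _ ht_bd)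
  have i0 : Integrable (fun ω => (1 - t ω) * E0 ω ^ 2) μ :=
    iE02.bdd_mul ht1m_meas.aestronglyMeasurable (ae_of_all _ ht_bd')
  have iAE1 : Integrable (fun ω => A ω * E1 ω) μ := my_mulL2_integrable hA hE1
  have iAE0 : Integrable (fun ω => A ω * E0 ω) μ := my_mulL2_integrable hA hE0
  have i2 : Integrable (fun ω => t ω * (A ω * E1 ω)) μ :=
    iAE1.bdd_mul ht_meas.aestronglyMeasurable (ae_of_all _ ht_bd)
  have i3 : Integrable (fun ω => (1 - t ω) * (A ω * E0 ω)) μ :=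
    iAE0.bdd_mul ht1m_meas.aestronglyMeasurable (ae_of_all _ ht_bd')
  -- variance of D and ∫ A²
  have hvD : variance D μ = (∫ ω, D ω ^ 2 ∂μ) - τ ^ 2 := by
    have h := variance_eq_sub hD
    rw [hDmean] at h
    simpa [Pi.pow_apply] using h
  have hA2 : ∫ ω, A ω ^ 2 ∂μ = (∫ ω, D ω ^ 2 ∂μ) - τ ^ 2 := by
    have hexp : (fun ω => A ω ^ 2) = fun ω => (D ω ^ 2 - (2*τ) * D ω) + τ ^ 2 := by
      funext ω; simp only [hAdef]; ring
    have D1 : Integrable (fun ω => D ω ^ 2 - (2*τ) * D ω) μ :=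
      hD.integrable_sq.sub ((hD.integrable one_le_two).const_mul _)
    rw [hexp, integral_add D1 (integrable_const _),
      integral_sub hD.integrable_sq ((hD.integrable one_le_two).const_mul _),
      integral_const_mul, hDmean, integral_const]
    simp
    ring
  -- put everything together
  have C0 : Integrable (fun ω => (1/p^2) * (t ω * E1 ω ^ 2)) μ := i1.const_mul _
  have C1 : Integrable (fun ω => (1/(1-p)^2) * ((1 - t ω) * E0 ω ^ 2)) μ := i0.const_mul _
  have C2 : Integrable (fun ω => (2/p) * (t ω * (A ω * E1 ω))) μ := i2.const_mul _
  have C3 : Integrable (fun ω => (2/(1-p)) * ((1 - t ω) * (A ω * E0 ω))) μ := i3.const_mul _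
  have B1 : Integrable (fun ω => A ω ^ 2 + (1/p^2) * (t ω * E1 ω ^ 2)) μ := iA2.add C0
  have B2 : Integrable (fun ω => A ω ^ 2 + (1/p^2) * (t ω * E1 ω ^ 2)
      + (1/(1-p)^2) * ((1 - t ω) * E0 ω ^ 2)) μ := B1.add C1
  have B3 : Integrable (fun ω => A ω ^ 2 + (1/p^2) * (t ω * E1 ω ^ 2)
      + (1/(1-p)^2) * ((1 - t ω) * E0 ω ^ 2)
      + (2/p) * (t ω * (A ω * E1 ω))) μ := B2.add C2
  rw [hfun, hvar, hsq]
  rw [integral_sub B3 C3, integral_add B2 C2, integral_add B1 C1, integral_add iA2 C0,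
    integral_const_mul, integral_const_mul, integral_const_mul, integral_const_mul,
    key _ (hE1mT.pow_const 2) iE12, key' _ (hE0mT.pow_const 2) iE02,
    key (fun ω => A ω * E1 ω) (hAmT.mul hE1mT) iAE1, key' (fun ω => A ω * E0 ω) (hAmT.mul hE0mT) iAE0,
    hAE1, hAE0, hA2, hvD]
  simp only [hE1def, hE0def]
  field_simp
  ring

/-- With `T ~ Bernoulli(p)` independent of `(X, Y(1), Y(0))`,
`μ_w(X) = E[Y(w)|X]`, observed `Y = T Y(1) + (1-T) Y(0)`, `τ = E[Y(1) - Y(0)]`, the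
efficient influence function
`φ* = μ₁(X) - μ₀(X) - τ + (T/p)(Y - μ₁(X)) - ((1-T)/(1-p))(Y - μ₀(X))`
has variance `(1/p) E[Var(Y(1)|X)] + (1/(1-p)) E[Var(Y(0)|X)] + Var(μ₁(X) - μ₀(X))`. -/
theorem efficient_influence_function_variance
    {Ω : Type*} {mΩ : MeasurableSpace Ω} {μ : Measure Ω} [IsProbabilityMeasure μ]
    {𝓧 : Type*} [MeasurableSpace 𝓧] (X : Ω → 𝓧) (hX : Measurable X)
    (Y1 Y0 : Ω → ℝ) (hY1 : MemLp Y1 2 μ) (hY0 : MemLp Y0 2 μ)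
    (T : Ω → Bool) (hT : Measurable T)
    (p : ℝ) (hp0 : 0 < p) (hp1 : p < 1)
    (hbern : μ {ω | T ω = true} = ENNReal.ofReal p)
    (hindep : IndepFun T (fun ω => (X ω, Y1 ω, Y0 ω)) μ) :
    variance (fun ω =>
        (μ[Y1 | MeasurableSpace.comap X inferInstance]) ω
          - (μ[Y0 | MeasurableSpace.comap X inferInstance]) ω
          - ((∫ ω', Y1 ω' ∂μ) - ∫ ω', Y0 ω' ∂μ)
          + ((if T ω then (1 : ℝ) else 0) / p) *
              ((if T ω then Y1 ω else Y0 ω)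
                - (μ[Y1 | MeasurableSpace.comap X inferInstance]) ω)
          - ((if T ω then (0 : ℝ) else 1) / (1 - p)) *
              ((if T ω then Y1 ω else Y0 ω)
                - (μ[Y0 | MeasurableSpace.comap X inferInstance]) ω)) μ
      = (1 / p) * (∫ ω, (Y1 ω - (μ[Y1 | MeasurableSpace.comap X inferInstance]) ω) ^ 2 ∂μ)
        + (1 / (1 - p)) *
            (∫ ω, (Y0 ω - (μ[Y0 | MeasurableSpace.comap X inferInstance]) ω) ^ 2 ∂μ)
        + variance (fun ω =>
            (μ[Y1 | MeasurableSpace.comap X inferInstance]) ω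
              - (μ[Y0 | MeasurableSpace.comap X inferInstance]) ω) μ := by
  have htriple : Measurable[MeasurableSpace.comap (fun ω => (X ω, Y1 ω, Y0 ω)) inferInstance]
      (fun ω => (X ω, Y1 ω, Y0 ω)) := Measurable.of_comap_le le_rfl
  refine my_eif_aux (MeasurableSpace.comap X inferInstance)
    (MeasurableSpace.comap (fun ω => (X ω, Y1 ω, Y0 ω)) inferInstance)
    Y1 Y0 hY1 hY0 T hT p hp0 hp1 hbern hX.comap_le ?_
    ((measurable_fst.comp measurable_snd).comp htriple)
    ((measurable_snd.comp measurable_snd).comp htriple)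
    ((IndepFun_iff_Indep _ _ _).mp hindep)
  have h1 : MeasurableSpace.comap X inferInstance
      = MeasurableSpace.comap (fun ω => (X ω, Y1 ω, Y0 ω))
          (MeasurableSpace.comap Prod.fst inferInstance) :=
    (MeasurableSpace.comap_comp (f := Prod.fst)
      (g := fun ω => (X ω, Y1 ω, Y0 ω)) (m := inferInstance)).symm
  rw [h1]
  exact MeasurableSpace.comap_mono measurable_fst.comap_le
end
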